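/- Let P and P' be n×n real positive semidefinite matrices with P ⪯ P', let R be an m×m positive definite matrix, C an m×n matrix, A an n×n matrix, and Q an n×n positive semidefinite matrix. Define the Riccati map f(S) = A (S − S Cᵀ (C S Cᵀ + R)⁻¹ C S) Aᵀ + Q. Then f(P) ⪯ f(P'), i.e., the one-step Riccati update is monotone with respect to the Loewner order. -/

import Mathlib

open Matrix

/-- The one-step Riccati map
`f(S) = A (S − S Cᵀ (C S Cᵀ + R)⁻¹ C S) Aᵀ + Q`. -/
noncomputable def riccatiMap {n m : ℕ}
    (A Q : Matrix (Fin n) (Fin n) ℝ)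
    (C : Matrix (Fin m) (Fin n) ℝ) (R : Matrix (Fin m) (Fin m) ℝ)
    (S : Matrix (Fin n) (Fin n) ℝ) : Matrix (Fin n) (Fin n) ℝ :=
  A * (S - S * Cᵀ * (C * S * Cᵀ + R)⁻¹ * (C * S)) * Aᵀ + Q

/-- The one-step Riccati update is monotone with respect to the
Loewner order: if `P ⪯ P'` (both positive semidefinite), `R ≻ 0`, `Q ⪰ 0`,
then `f(P) ⪯ f(P')`. -/
lemma riccati_key {n m : ℕ} (P P' : Matrix (Fin n) (Fin n) ℝ)
    (C : Matrix (Fin m) (Fin n) ℝ) (M M' N N' : Matrix (Fin m) (Fin m) ℝ)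
    (hPt : Pᵀ = P) (hP't : P'ᵀ = P') (hNt : Nᵀ = N) (hN't : N'ᵀ = N')
    (hMN : M * N = 1) (hNM : N * M = 1) (hN'M' : N' * M' = 1)
    (hMM' : M' = M + C * (P' - P) * Cᵀ) :
    (P' - P' * Cᵀ * N' * (C * P')) - (P - P * Cᵀ * N * (C * P))
      = (1 - P' * Cᵀ * N' * C) * (P' - P) * (1 - P' * Cᵀ * N' * C)ᵀ
        + (P' * Cᵀ * N' - P * Cᵀ * N) * M * (P' * Cᵀ * N' - P * Cᵀ * N)ᵀ := by
  set Z := P' * Cᵀ * N' with hZ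
  set K := P * Cᵀ * N with hK
  have tZ : Zᵀ = N' * (C * P') := by
    rw [hZ, transpose_mul, transpose_mul, hN't, transpose_transpose, hP't]
  have tK : Kᵀ = N * (C * P) := by
    rw [hK, transpose_mul, transpose_mul, hNt, transpose_transpose, hPt]
  have h1 : Z * M' = P' * Cᵀ := by rw [hZ, Matrix.mul_assoc, hN'M', Matrix.mul_one]
  have h2 : K * M = P * Cᵀ := by rw [hK, Matrix.mul_assoc, hNM, Matrix.mul_one]
  have h3 : M * Kᵀ = C * P := by rw [tK, ← Matrix.mul_assoc, hMN, Matrix.one_mul]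
  have hZM : Z * M = P' * Cᵀ - Z * (C * (P' - P) * Cᵀ) := by
    have h1' := h1
    rw [hMM', Matrix.mul_add] at h1'
    exact eq_sub_of_add_eq h1'
  have expand2 : (Z - K) * M * (Z - K)ᵀ
      = Z * M * Zᵀ - Z * (C * P) - P * Cᵀ * Zᵀ + P * Cᵀ * Kᵀ := by
    simp only [transpose_sub, Matrix.sub_mul, Matrix.mul_sub]
    rw [Matrix.mul_assoc Z M Kᵀ, h3, h2]
    abel
  rw [expand2, hZM, Matrix.sub_mul]
  simp only [tZ, tK, transpose_sub, transpose_one, transpose_mul, transpose_transpose,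
    hPt, hP't, hNt, hN't, hZ, hK, Matrix.mul_sub, Matrix.sub_mul, Matrix.mul_add,
    Matrix.add_mul, Matrix.mul_one, Matrix.one_mul, Matrix.mul_assoc]
  abel
open Matrix

private theorem riccatiMap_monotone_aux {n m : ℕ}
    (P P' : Matrix (Fin n) (Fin n) ℝ)
    (R : Matrix (Fin m) (Fin m) ℝ)
    (C : Matrix (Fin m) (Fin n) ℝ)
    (A Q : Matrix (Fin n) (Fin n) ℝ)
    (hP : P.PosSemidef) (hP' : P'.PosSemidef)
    (hle : (P' - P).PosSemidef)
    (hR : R.PosDef) (hQ : Q.PosSemidef) :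
    (((A * (P' - P' * Cᵀ * (C * P' * Cᵀ + R)⁻¹ * (C * P')) * Aᵀ + Q)) -
     ((A * (P - P * Cᵀ * (C * P * Cᵀ + R)⁻¹ * (C * P)) * Aᵀ + Q))).PosSemidef := by
  have hMpd : (C * P * Cᵀ + R).PosDef :=
    Matrix.PosDef.posSemidef_add (by simpa using hP.mul_mul_conjTranspose_same C) hR
  have hM'pd : (C * P' * Cᵀ + R).PosDef :=
    Matrix.PosDef.posSemidef_add (by simpa using hP'.mul_mul_conjTranspose_same C) hR
  set M := C * P * Cᵀ + R with hMdef
  set M' := C * P' * Cᵀ + R with hM'def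
  have hMN : M * M⁻¹ = 1 := Matrix.mul_nonsing_inv _ hMpd.det_pos.ne'.isUnit
  have hNM : M⁻¹ * M = 1 := Matrix.nonsing_inv_mul _ hMpd.det_pos.ne'.isUnit
  have hN'M' : M'⁻¹ * M' = 1 := Matrix.nonsing_inv_mul _ hM'pd.det_pos.ne'.isUnit
  have hNt : M⁻¹ᵀ = M⁻¹ := by simpa [Matrix.IsSymm] using hMpd.inv.isHermitian
  have hN't : M'⁻¹ᵀ = M'⁻¹ := by simpa [Matrix.IsSymm] using hM'pd.inv.isHermitian
  have hPt : Pᵀ = P := by simpa [Matrix.IsSymm] using hP.isHermitian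
  have hP't : P'ᵀ = P' := by simpa [Matrix.IsSymm] using hP'.isHermitian
  have hMM' : M' = M + C * (P' - P) * Cᵀ := by
    rw [hMdef, hM'def]
    simp only [Matrix.mul_sub, Matrix.sub_mul]
    abel
  have key := riccati_key P P' C M M' M⁻¹ M'⁻¹ hPt hP't hNt hN't hMN hNM hN'M' hMM'
  have main : (A * (P' - P' * Cᵀ * M'⁻¹ * (C * P')) * Aᵀ + Q) -
      (A * (P - P * Cᵀ * M⁻¹ * (C * P)) * Aᵀ + Q)
      = A * ((1 - P' * Cᵀ * M'⁻¹ * C) * (P' - P) * (1 - P' * Cᵀ * M'⁻¹ * C)ᵀ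
        + (P' * Cᵀ * M'⁻¹ - P * Cᵀ * M⁻¹) * M * (P' * Cᵀ * M'⁻¹ - P * Cᵀ * M⁻¹)ᵀ) * Aᵀ := by
    rw [← key]
    simp only [Matrix.mul_sub, Matrix.sub_mul]
    abel
  rw [main]
  have h1 : ((1 - P' * Cᵀ * M'⁻¹ * C) * (P' - P) * (1 - P' * Cᵀ * M'⁻¹ * C)ᵀ).PosSemidef := by
    have := hle.mul_mul_conjTranspose_same (1 - P' * Cᵀ * M'⁻¹ * C)
    rwa [conjTranspose_eq_transpose_of_trivial] at this
  have h2 : ((P' * Cᵀ * M'⁻¹ - P * Cᵀ * M⁻¹) * M *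
      (P' * Cᵀ * M'⁻¹ - P * Cᵀ * M⁻¹)ᵀ).PosSemidef := by
    have := hMpd.posSemidef.mul_mul_conjTranspose_same (P' * Cᵀ * M'⁻¹ - P * Cᵀ * M⁻¹)
    rwa [conjTranspose_eq_transpose_of_trivial] at this
  have := (h1.add h2).mul_mul_conjTranspose_same A
  rwa [conjTranspose_eq_transpose_of_trivial] at this

theorem riccatiMap_monotone {n m : ℕ}
    (P P' : Matrix (Fin n) (Fin n) ℝ)
    (R : Matrix (Fin m) (Fin m) ℝ)
    (C : Matrix (Fin m) (Fin n) ℝ)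
    (A Q : Matrix (Fin n) (Fin n) ℝ)
    (hP : P.PosSemidef) (hP' : P'.PosSemidef)
    (hle : (P' - P).PosSemidef)
    (hR : R.PosDef) (hQ : Q.PosSemidef) :
    (riccatiMap A Q C R P' - riccatiMap A Q C R P).PosSemidef := by
  unfold riccatiMap
  exact riccatiMap_monotone_aux P P' R C A Q hP hP' hle hR hQ
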